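/- Let (C, L, R) be a factorisation category and E → C a functor that is either a Grothendieck fibration over C which is a preopfibration over R, or a Grothendieck opfibration over C which is a prefibration over L. Then E → C is a semifibration over (C, L, R). -/
import Mathlib


open CategoryTheory CategoryTheory.Functor CategoryTheory.Limits

universe v₁ v₂ u₁ u₂

section Fibrations

variable {C : Type u₁} [Category.{v₁} C] {E : Type u₂} [Category.{v₂} E]

/-- A Grothendieck prefibration: every morphism of the base admits a (weakly) cartesian
lift with prescribed codomain. -/
def IsPrefibration (p : E ⥤ C) : Prop :=
  ∀ {c c' : C} (f : c ⟶ c') (Y : E), p.obj Y = c' → ∃ (X : E) (φ : X ⟶ Y), p.IsCartesian f φ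

/-- A Grothendieck preopfibration: every morphism of the base admits a (weakly) opcartesian
lift with prescribed domain. -/
def IsPreopfibration (p : E ⥤ C) : Prop :=
  ∀ {c c' : C} (f : c ⟶ c') (X : E), p.obj X = c → ∃ (Y : E) (φ : X ⟶ Y), p.IsCocartesian f φ

/-- A Grothendieck opfibration: every morphism of the base admits a strongly opcartesian
lift with prescribed domain. -/
def IsOpfibration (p : E ⥤ C) : Prop :=
  ∀ {c c' : C} (f : c ⟶ c') (X : E), p.obj X = c →
    ∃ (Y : E) (φ : X ⟶ Y), p.IsStronglyCocartesian f φ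

/-- A functor has discrete fibres if every morphism in a fibre is an identity. -/
def HasDiscreteFibers (p : E ⥤ C) : Prop :=
  ∀ (c : C) (X Y : Fiber p c) (f : X ⟶ Y), ∃ h : X = Y, f = eqToHom h

end Fibrations

section Factorization

variable (C : Type u₁) [Category.{v₁} C]

/-- A factorisation category: a category equipped with two subcategories `L` (left class)
and `R` (right class) containing all isomorphisms, such that every morphism factors,
uniquely up to unique isomorphism, as a map of `L` followed by a map of `R`. -/
structure FactorizationCategory where
  L : MorphismProperty C
  R : MorphismProperty C
  L_iso : ∀ {x y : C} (f : x ⟶ y), IsIso f → L f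
  R_iso : ∀ {x y : C} (f : x ⟶ y), IsIso f → R f
  L_comp : ∀ {x y z : C} (f : x ⟶ y) (g : y ⟶ z), L f → L g → L (f ≫ g)
  R_comp : ∀ {x y z : C} (f : x ⟶ y) (g : y ⟶ z), R f → R g → R (f ≫ g)
  factor : ∀ {x y : C} (f : x ⟶ y), ∃ (z : C) (l : x ⟶ z) (r : z ⟶ y),
    L l ∧ R r ∧ l ≫ r = f
  factor_unique : ∀ {x y : C} (f : x ⟶ y) {z z' : C}
    (l : x ⟶ z) (r : z ⟶ y) (l' : x ⟶ z') (r' : z' ⟶ y),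
    L l → R r → L l' → R r' → l ≫ r = f → l' ≫ r' = f →
    ∃! e : z ≅ z', l ≫ e.hom = l' ∧ e.hom ≫ r' = r

variable {C}
variable {E : Type u₂} [Category.{v₂} E]

/-- A semifibration over a factorisation category `(C, L, R)`: cartesian lifts of `L`-maps,
opcartesian lifts of `R`-maps, and every morphism lying over a composite of an `R`-map
followed by an `L`-map factors as an opcartesian morphism, a fibrewise morphism
and a cartesian morphism. -/
structure IsSemifibration (p : E ⥤ C) (FC : FactorizationCategory C) : Prop where
  cartLift : ∀ {c c' : C} (l : c ⟶ c'), FC.L l → ∀ Y : E, p.obj Y = c' →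
    ∃ (X : E) (φ : X ⟶ Y), p.IsCartesian l φ
  cocartLift : ∀ {c c' : C} (r : c ⟶ c'), FC.R r → ∀ X : E, p.obj X = c →
    ∃ (Y : E) (φ : X ⟶ Y), p.IsCocartesian r φ
  fact : ∀ {X Y : E} (α : X ⟶ Y) {c : C} (r : p.obj X ⟶ c) (l : c ⟶ p.obj Y),
    FC.R r → FC.L l → p.map α = r ≫ l →
    ∃ (X' Y' : E) (ρ : X ⟶ X') (φ : X' ⟶ Y') (lam : Y' ⟶ Y),
      p.IsCocartesian r ρ ∧ p.IsHomLift (𝟙 c) φ ∧ p.IsCartesian l lam ∧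
        ρ ≫ φ ≫ lam = α

end Factorization

/-- A Grothendieck fibration which is a preopfibration over the right class, or a
Grothendieck opfibration which is a prefibration over the left class, is a
semifibration over the factorisation category. -/
theorem isSemifibration_of_fibration_or_opfibration {C : Type u₁} [Category.{v₁} C]
    {E : Type u₂} [Category.{v₂} E] (p : E ⥤ C) (FC : FactorizationCategory C)
    (h : (p.IsFibered ∧ ∀ {c c' : C} (r : c ⟶ c'), FC.R r → ∀ X : E, p.obj X = c →
            ∃ (Y : E) (φ : X ⟶ Y), p.IsCocartesian r φ) ∨
         (IsOpfibration p ∧ ∀ {c c' : C} (l : c ⟶ c'), FC.L l → ∀ Y : E, p.obj Y = c' →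
            ∃ (X : E) (φ : X ⟶ Y), p.IsCartesian l φ)) :
    IsSemifibration p FC := by
  constructor
  · intro c c' l hl Y hY
    rcases h with ⟨hfib, _⟩ | ⟨_, hpre⟩
    · haveI := hfib
      exact IsPreFibered.exists_isCartesian p hY l
    · exact hpre l hl Y hY
  · intro c c' r hr X hX
    rcases h with ⟨_, hpre⟩ | ⟨hop, _⟩
    · exact hpre r hr X hX
    · obtain ⟨Y, φ, hφ⟩ := hop r X hX
      exact ⟨Y, φ, inferInstance⟩
  · intro X Y α c r l hr hl hα
    haveI : p.IsHomLift (r ≫ l) α := hα ▸ (inferInstance : p.IsHomLift (p.map α) α)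
    rcases h with ⟨hfib, hpre⟩ | ⟨hop, hpre⟩
    · haveI := hfib
      obtain ⟨Y', lam, hlam⟩ := IsPreFibered.exists_isCartesian p rfl l
      haveI := hlam
      haveI : p.IsStronglyCartesian l lam := inferInstance
      let β : X ⟶ Y' := IsStronglyCartesian.map p l lam (g := r) rfl α
      haveI : p.IsHomLift r β := IsStronglyCartesian.map_isHomLift p l lam rfl α
      obtain ⟨X', ρ, hρ⟩ := hpre r hr X rfl
      haveI := hρ
      refine ⟨X', Y', ρ, IsCocartesian.map p r ρ β, lam, hρ, inferInstance, hlam, ?_⟩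
      rw [← Category.assoc, IsCocartesian.fac]
      exact IsStronglyCartesian.fac p l lam rfl α
    · obtain ⟨X', ρ, hρ⟩ := hop r X rfl
      haveI := hρ
      let β : X' ⟶ Y := IsStronglyCocartesian.map p r ρ (g := l) rfl α
      haveI : p.IsHomLift l β := IsStronglyCocartesian.map_isHomLift p r ρ rfl α
      obtain ⟨Y', lam, hlam⟩ := hpre l hl Y rfl
      haveI := hlam
      refine ⟨X', Y', ρ, IsCartesian.map p l lam β, lam, inferInstance, inferInstance, hlam, ?_⟩
      rw [IsCartesian.fac]
      exact IsStronglyCocartesian.fac p r ρ rfl α
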